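/- Let (g,[·,·],φ) be a regular Hom-Lie algebra. For any integer s, the map ad^s defined by ad^s_x y = [φ^s(x), y] is a representation of g on g with respect to φ. -/

import Mathlib

open LinearMap Module

/-- A (regular, i.e. multiplicative with invertible structure map) Hom-Lie algebra. -/
structure HomLieAlgebra (K g : Type*) [Field K] [AddCommGroup g] [Module K g] where
  bracket : g →ₗ[K] g →ₗ[K] g
  phi : g ≃ₗ[K] g
  skew : ∀ x y, bracket x y = - bracket y x
  phi_bracket : ∀ x y, phi (bracket x y) = bracket (phi x) (phi y)
  jacobi : ∀ x y z,
    bracket (phi x) (bracket y z) + bracket (phi y) (bracket z x)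
      + bracket (phi z) (bracket x y) = 0

variable {K g V : Type*} [Field K] [AddCommGroup g] [Module K g]
  [AddCommGroup V] [Module K V]

/-- `ρ` is a representation of the Hom-Lie algebra `L` on `V` with respect to `β`. -/
def HomLieAlgebra.IsRep (L : HomLieAlgebra K g) (β : V ≃ₗ[K] V)
    (ρ : g →ₗ[K] V →ₗ[K] V) : Prop :=
  (∀ x u, ρ (L.phi x) (β u) = β (ρ x u)) ∧
  (∀ x y u, ρ (L.bracket x y) (β u) = ρ (L.phi x) (ρ y u) - ρ (L.phi y) (ρ x u))

/-- The `φˢ`-adjoint action: `adˢ_x y = [φˢ(x), y]`. -/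
def adS (L : HomLieAlgebra K g) (s : ℤ) (x y : g) : g :=
  L.bracket ((L.phi ^ s) x) y


lemma phi_inv_bracket (L : HomLieAlgebra K g) (x y : g) :
    L.phi⁻¹ (L.bracket x y) = L.bracket (L.phi⁻¹ x) (L.phi⁻¹ y) := by
  have h := L.phi_bracket (L.phi⁻¹ x) (L.phi⁻¹ y)
  have : (L.phi⁻¹ : g ≃ₗ[K] g) = L.phi.symm := rfl
  simp [this] at h ⊢
  simp [← h]

lemma zpow_bracket (L : HomLieAlgebra K g) (s : ℤ) (x y : g) :
    (L.phi ^ s) (L.bracket x y) = L.bracket ((L.phi ^ s) x) ((L.phi ^ s) y) := by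
  induction s using Int.induction_on generalizing x y with
  | zero => simp
  | succ n ih =>
      have h : L.phi ^ ((n : ℤ) + 1) = L.phi ^ (n : ℤ) * L.phi := zpow_add_one _ _
      have ha : ∀ z, (L.phi ^ ((n : ℤ) + 1)) z = (L.phi ^ (n : ℤ)) (L.phi z) := by
        intro z; rw [h]; rfl
      rw [ha, ha, ha, L.phi_bracket]; exact ih _ _
  | pred n ih =>
      have h : L.phi ^ (-(n : ℤ) - 1) = L.phi ^ (-(n : ℤ)) * L.phi⁻¹ := zpow_sub_one _ _
      have ha : ∀ z, (L.phi ^ (-(n : ℤ) - 1)) z = (L.phi ^ (-(n : ℤ))) (L.phi⁻¹ z) := by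
        intro z; rw [h]; rfl
      rw [ha, ha, ha, phi_inv_bracket]; exact ih _ _

lemma zpow_comm_phi (L : HomLieAlgebra K g) (s : ℤ) (x : g) :
    (L.phi ^ s) (L.phi x) = L.phi ((L.phi ^ s) x) := by
  have h : L.phi ^ s * L.phi = L.phi * L.phi ^ s := by
    rw [← zpow_one_add, ← zpow_add_one, add_comm]
  have h1 : (L.phi ^ s * L.phi) x = (L.phi * L.phi ^ s) x := by rw [h]
  exact h1

/-- for any integer `s`, `adˢ` is a representation of `g` on `g` with
respect to `φ`. -/
theorem adS_isRep (L : HomLieAlgebra K g) (s : ℤ) :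
    (∀ x y : g, adS L s (L.phi x) (L.phi y) = L.phi (adS L s x y)) ∧
    (∀ x y z : g, adS L s (L.bracket x y) (L.phi z)
      = adS L s (L.phi x) (adS L s y z) - adS L s (L.phi y) (adS L s x z)) := by
  constructor
  · intro x y
    simp only [adS, zpow_comm_phi, L.phi_bracket]
  · intro x y z
    simp only [adS, zpow_bracket, zpow_comm_phi]
    have hj := L.jacobi ((L.phi ^ s) x) ((L.phi ^ s) y) z
    rw [L.skew (L.bracket ((L.phi ^ s) x) ((L.phi ^ s) y)) (L.phi z)]
    have h2 : L.bracket (L.phi z) (L.bracket ((L.phi ^ s) x) ((L.phi ^ s) y))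
        = - L.bracket (L.phi ((L.phi ^ s) x)) (L.bracket ((L.phi ^ s) y) z)
          - L.bracket (L.phi ((L.phi ^ s) y)) (L.bracket z ((L.phi ^ s) x)) := by
      linear_combination (norm := abel) hj
    rw [h2, L.skew z ((L.phi ^ s) x)]
    simp
    abel
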